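/- For every r ≥ 2, every r × r matrix M over the field with two elements can be written as the sum of at most two invertible r × r matrices over F₂. -/

import Mathlib

open Matrix Polynomial

/-- Invertibility criterion via trivial kernel. -/
private lemma aux_isUnit_of_ker {r : ℕ} (N : Matrix (Fin r) (Fin r) (ZMod 2))
    (h : ∀ x : Fin r → ZMod 2, N.mulVec x = 0 → x = 0) : IsUnit N := by
  rw [Matrix.isUnit_iff_isUnit_det, isUnit_iff_ne_zero]
  intro hdet
  obtain ⟨v, hv, hv0⟩ := (Matrix.exists_mulVec_eq_zero_iff).2 hdet
  exact hv (h v hv0)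

open Fin.NatCast in
/-- The diagonal-with-a-zero case. -/
private lemma aux_diag_zero {r : ℕ} (hr : 2 ≤ r) (d : Fin r → ZMod 2) (k : Fin r)
    (hk : d k = 0) :
    ∃ A B : Matrix (Fin r) (Fin r) (ZMod 2), IsUnit A ∧ IsUnit B ∧ diagonal d = A + B := by
  haveI : NeZero r := ⟨by omega⟩
  set S : Matrix (Fin r) (Fin r) (ZMod 2) :=
    Matrix.of (fun i j => if j = i + 1 then 1 else 0) with hS
  have hSmul : ∀ (x : Fin r → ZMod 2) (i : Fin r), S.mulVec x i = x (i + 1) := by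
    intro x i
    simp [hS, Matrix.mulVec, dotProduct, ite_mul]
  have hSunit : IsUnit S := by
    apply aux_isUnit_of_ker
    intro x hx
    funext j
    have h1 := congrFun hx (j - 1)
    rw [hSmul] at h1
    simpa using h1
  have hDSunit : IsUnit (diagonal d + S) := by
    apply aux_isUnit_of_ker
    intro x hx
    have key : ∀ i : Fin r, x (i + 1) = d i * x i := by
      intro i
      have h1 := congrFun hx i
      rw [Matrix.add_mulVec, Pi.add_apply, hSmul, Matrix.mulVec_diagonal] at h1
      have h2 := eq_neg_of_add_eq_zero_right h1
      rwa [CharTwo.neg_eq] at h2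
    have zero_at : ∀ m : ℕ, x (k + 1 + (m : Fin r)) = 0 := by
      intro m
      induction m with
      | zero => simpa [hk] using key k
      | succ m ih =>
        have : ((m + 1 : ℕ) : Fin r) = (m : Fin r) + 1 := by push_cast; ring
        rw [this, ← add_assoc, key (k + 1 + (m : Fin r)), ih, mul_zero]
    funext j
    have h3 := zero_at (j - (k + 1)).val
    rwa [Fin.cast_val_eq_self, add_sub_cancel] at h3
  refine ⟨S, diagonal d + S, hSunit, hDSunit, ?_⟩
  ext i j
  simp only [Matrix.add_apply]
  have : S i j + S i j = 0 := CharTwo.add_self_eq_zero _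
  linear_combination -this

/-- The identity case: uses multiplication in `AdjoinRoot (X^r + X + 1)`. -/
private lemma aux_one {r : ℕ} (hr : 2 ≤ r) :
    ∃ A B : Matrix (Fin r) (Fin r) (ZMod 2), IsUnit A ∧ IsUnit B ∧
      (1 : Matrix (Fin r) (Fin r) (ZMod 2)) = A + B := by
  set f : (ZMod 2)[X] := X ^ r + (X + 1) with hf
  have hmonic : f.Monic := by
    apply monic_X_pow_add
    calc degree (X + 1 : (ZMod 2)[X]) ≤ 1 := by
          simpa using degree_add_le (X : (ZMod 2)[X]) 1
      _ < (r : WithBot ℕ) := by exact_mod_cast (show 1 < r by omega)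
  have hdeg : f.natDegree = r := by
    rw [hf]
    compute_degree!
    all_goals first
      | omega
      | (rw [if_neg (by omega : ¬ (1 = r)), if_neg (by omega : ¬ (r = 0))]; decide)
  set R := AdjoinRoot f with hR
  set α : R := AdjoinRoot.root f with hα
  -- the defining relation
  have hrel : α ^ r + α + 1 = 0 := by
    have h0 := AdjoinRoot.eval₂_root f
    rw [hf] at h0
    simp only [eval₂_add, eval₂_pow, eval₂_X, eval₂_one] at h0
    rw [← hα] at h0
    linear_combination h0
  have htwo : (2 : R) = 0 := by
    have h := map_natCast (algebraMap (ZMod 2) R) 2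
    have h2 : ((2 : ℕ) : ZMod 2) = 0 := by decide
    rw [h2, map_zero] at h
    simpa using h.symm
  have hneg : ∀ x : R, -x = x := by
    intro x
    linear_combination (-x) * htwo
  -- α and α + 1 are units
  have hgeom : (∑ i ∈ Finset.range (r - 1), α ^ i) * (α - 1) = α ^ (r - 1) - 1 :=
    geom_sum_mul α (r - 1)
  have hpow : α * α ^ (r - 1) = α ^ r := by
    rw [← pow_succ']
    congr 1
    omega
  have hαunit : IsUnit α := by
    refine IsUnit.of_mul_eq_one (a := α) ((α - 1) * ∑ i ∈ Finset.range (r - 1), α ^ i) ?_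
    linear_combination α * hgeom + hpow + hrel - (α + 1) * htwo
  have hα1unit : IsUnit (α + 1) := by
    refine IsUnit.of_mul_eq_one (a := α + 1) (α * ∑ i ∈ Finset.range (r - 1), α ^ i) ?_
    linear_combination α * hgeom + hpow + hrel - (α + 1) * htwo +
      (α * ∑ i ∈ Finset.range (r - 1), α ^ i) * htwo
  -- the basis
  have hdim : (AdjoinRoot.powerBasis' hmonic).dim = r := by
    rw [AdjoinRoot.powerBasis'_dim, hdeg]
  let b : Module.Basis (Fin r) (ZMod 2) R :=
    (AdjoinRoot.powerBasis' hmonic).basis.reindex (finCongr hdim)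
  obtain ⟨u, hu⟩ := hαunit.exists_right_inv
  obtain ⟨v, hv⟩ := hα1unit.exists_right_inv
  set A := LinearMap.toMatrix b b (LinearMap.mulLeft (ZMod 2) α) with hA
  set B := LinearMap.toMatrix b b (LinearMap.mulLeft (ZMod 2) (α + 1)) with hB
  have key : ∀ (y z : R), y * z = 1 →
      LinearMap.toMatrix b b (LinearMap.mulLeft (ZMod 2) y) *
        LinearMap.toMatrix b b (LinearMap.mulLeft (ZMod 2) z) = 1 := by
    intro y z hyz
    rw [← LinearMap.toMatrix_comp b b b, ← LinearMap.mulLeft_mul, hyz,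
      LinearMap.mulLeft_one, LinearMap.toMatrix_id]
  have hAunit : IsUnit A := by
    refine ⟨⟨A, LinearMap.toMatrix b b (LinearMap.mulLeft (ZMod 2) u), ?_, ?_⟩, rfl⟩
    · exact key α u hu
    · exact key u α (by rwa [mul_comm] at hu)
  have hBunit : IsUnit B := by
    refine ⟨⟨B, LinearMap.toMatrix b b (LinearMap.mulLeft (ZMod 2) v), ?_, ?_⟩, rfl⟩
    · exact key (α + 1) v hv
    · exact key v (α + 1) (by rwa [mul_comm] at hv)
  refine ⟨A, B, hAunit, hBunit, ?_⟩
  have hsum : LinearMap.mulLeft (ZMod 2) α + LinearMap.mulLeft (ZMod 2) (α + 1)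
      = LinearMap.mulLeft (ZMod 2) (1 : R) := by
    ext x
    simp only [LinearMap.add_apply, LinearMap.mulLeft_apply, one_mul]
    linear_combination (α * x) * htwo
  rw [hA, hB, ← map_add, hsum, LinearMap.mulLeft_one, LinearMap.toMatrix_id]

/-- Every `r × r` matrix over `𝔽₂` with `r ≥ 2` is a sum of (at most) two invertible matrices. -/
theorem stmt_0 (r : ℕ) (hr : 2 ≤ r) (M : Matrix (Fin r) (Fin r) (ZMod 2)) :
    ∃ A B : Matrix (Fin r) (Fin r) (ZMod 2), IsUnit A ∧ IsUnit B ∧ M = A + B := by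
  obtain ⟨L, L', d, hM⟩ := Matrix.Pivot.exists_list_transvec_mul_diagonal_mul_list_transvec M
  set P := (L.map Matrix.TransvectionStruct.toMatrix).prod with hP
  set Q := (L'.map Matrix.TransvectionStruct.toMatrix).prod with hQ
  have hPunit : IsUnit P := by
    rw [Matrix.isUnit_iff_isUnit_det, Matrix.TransvectionStruct.det_toMatrix_prod]
    exact isUnit_one
  have hQunit : IsUnit Q := by
    rw [Matrix.isUnit_iff_isUnit_det, Matrix.TransvectionStruct.det_toMatrix_prod]
    exact isUnit_one
  have hdiag : ∃ A B : Matrix (Fin r) (Fin r) (ZMod 2),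
      IsUnit A ∧ IsUnit B ∧ diagonal d = A + B := by
    by_cases h : ∃ k, d k = 0
    · obtain ⟨k, hk⟩ := h
      exact aux_diag_zero hr d k hk
    · push_neg at h
      have hd1 : d = fun _ => 1 := by
        funext i
        have : d i = 0 ∨ d i = 1 := by
          have : ∀ x : ZMod 2, x = 0 ∨ x = 1 := by decide
          exact this (d i)
        exact this.resolve_left (h i)
      rw [hd1]
      have : diagonal (fun _ : Fin r => (1 : ZMod 2)) = 1 := Matrix.diagonal_one
      rw [this]
      exact aux_one hr
  obtain ⟨A, B, hAu, hBu, hAB⟩ := hdiag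
  refine ⟨P * A * Q, P * B * Q, (hPunit.mul hAu).mul hQunit, (hPunit.mul hBu).mul hQunit, ?_⟩
  rw [hM, hAB]
  noncomm_ring
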